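/- Let B and W be Banach spaces and (L_t)_{t∈[0,1]} a family of bounded linear operators from B to W such that t ↦ L_t is continuous in operator norm and there is a constant C with ‖x‖ ≤ C‖L_t x‖ for all x ∈ B and all t ∈ [0,1]. Then L_1 is surjective if and only if L_0 is surjective. -/

import Mathlib

theorem stmt12
    {B W : Type*} [NormedAddCommGroup B] [NormedSpace ℝ B] [CompleteSpace B]
    [NormedAddCommGroup W] [NormedSpace ℝ W] [CompleteSpace W]
    (L : ℝ → (B →L[ℝ] W))
    (hcont : ContinuousOn L (Set.Icc 0 1))
    (C : ℝ)
    (hest : ∀ t ∈ Set.Icc (0 : ℝ) 1, ∀ x : B, ‖x‖ ≤ C * ‖L t x‖) :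
    Function.Surjective (L 1) ↔ Function.Surjective (L 0) := by
  set I : Set ℝ := Set.Icc 0 1 with hI
  -- each L t is antilipschitz, hence injective with closed range
  have hanti : ∀ t ∈ I, AntilipschitzWith C.toNNReal (L t) := by
    intro t ht
    apply (L t).antilipschitz_of_bound
    intro x
    exact (hest t ht x).trans
      (mul_le_mul_of_nonneg_right (Real.le_coe_toNNReal C) (norm_nonneg _))
  have key : ∀ t ∈ I, ∀ s ∈ I, Function.Surjective (L t) → Function.Surjective (L s) := by
    intro t ht s hs hsurj
    have hLr : Continuous fun u : I => L u := continuousOn_iff_continuous_restrict.1 hcont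
    set S : Set I := {u : I | Function.Surjective (L u)} with hS
    -- S is open
    have hopen : IsOpen S := by
      rw [isOpen_iff_mem_nhds]
      rintro u₀ hu₀
      have hinj : LinearMap.ker (L u₀) = ⊥ :=
        LinearMap.ker_eq_bot.2 (by exact (hanti u₀ u₀.2).injective)
      have hsur : LinearMap.range (L u₀ : B →ₗ[ℝ] W) = ⊤ := LinearMap.range_eq_top.2 (by exact hu₀)
      set e : B ≃L[ℝ] W := ContinuousLinearEquiv.ofBijective (L u₀) hinj hsur with he
      set es : W →L[ℝ] B := (e.symm : W →L[ℝ] B) with hes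
      set r : ℝ := (‖es‖ + 1)⁻¹ with hr
      have hrpos : 0 < r := by positivity
      have hball : {u : I | L u ∈ Metric.ball (L u₀) r} ∈ nhds u₀ := by
        apply hLr.continuousAt.preimage_mem_nhds
        exact Metric.ball_mem_nhds _ hrpos
      apply Filter.mem_of_superset hball
      intro u hu
      -- ‖es ∘ (L u - L u₀)‖ < 1
      have hdist : ‖L u - L u₀‖ < r := by
        simpa [dist_eq_norm] using hu
      set M : B →L[ℝ] B := es.comp ((L u : B →L[ℝ] W) - L u₀) with hM
      have hMnorm : ‖M‖ < 1 := by
        calc ‖M‖ ≤ ‖es‖ * ‖(L u : B →L[ℝ] W) - L u₀‖ := ContinuousLinearMap.opNorm_comp_le _ _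
          _ ≤ ‖es‖ * r := by
              apply mul_le_mul_of_nonneg_left hdist.le (norm_nonneg _)
          _ < 1 := by
              rw [hr]
              rw [mul_inv_lt_iff₀ (by positivity)]
              linarith
      have hMnorm' : ‖-M‖ < 1 := by rwa [norm_neg]
      set u1 : (B →L[ℝ] B)ˣ := Units.oneSub (-M) hMnorm' with hu1
      have hval : (u1 : B →L[ℝ] B) = 1 + M := by
        rw [hu1, Units.val_oneSub, sub_neg_eq_add]
      have hcomp : es.comp (L u : B →L[ℝ] W) = (u1 : B →L[ℝ] B) := by
        rw [hval]
        ext x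
        simp only [ContinuousLinearMap.comp_apply, ContinuousLinearMap.add_apply,
          ContinuousLinearMap.one_apply, hM, ContinuousLinearMap.sub_apply]
        have hx : es (L u₀ x) = x := by
          simp only [hes, he, ContinuousLinearEquiv.coe_coe]
          exact (ContinuousLinearEquiv.ofBijective (L u₀) hinj hsur).symm_apply_apply x
        rw [map_sub, hx]
        abel
      -- conclude surjectivity of L u
      intro w
      refine ⟨(↑u1⁻¹ : B →L[ℝ] B) (es w), ?_⟩
      have h1 : es ((L u) ((↑u1⁻¹ : B →L[ℝ] B) (es w))) = es w := by
        have := congrArg (fun f : B →L[ℝ] B => f ((↑u1⁻¹ : B →L[ℝ] B) (es w))) hcomp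
        simp only [ContinuousLinearMap.comp_apply] at this
        rw [this, ← ContinuousLinearMap.mul_apply, Units.mul_inv, ContinuousLinearMap.one_apply]
      have hes_inj : Function.Injective es := by
        simp only [hes, ContinuousLinearEquiv.coe_coe]
        exact e.symm.injective
      exact hes_inj h1
    -- S is closed
    have hclosed : IsClosed S := by
      rw [← closure_subset_iff_isClosed]
      intro u hu
      intro w
      have hcl : IsClosed (Set.range (L u)) :=
        (hanti u u.2).isClosed_range (L u).uniformContinuous
      have : w ∈ closure (Set.range (L u)) := by
        rw [Metric.mem_closure_iff]
        intro ε hε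
        set D : ℝ := |C| with hD
        set δ : ℝ := ε / (D * ‖w‖ + 1) with hδ
        have hden : 0 < D * ‖w‖ + 1 := by positivity
        have hδpos : 0 < δ := div_pos hε hden
        have hball : {v : I | L v ∈ Metric.ball (L u) δ} ∈ nhds u := by
          apply hLr.continuousAt.preimage_mem_nhds
          exact Metric.ball_mem_nhds _ hδpos
        obtain ⟨v, hvball, hvS⟩ := mem_closure_iff_nhds.1 hu _ hball
        obtain ⟨x, hx⟩ := hvS w
        have hxnorm : ‖x‖ ≤ D * ‖w‖ := by
          calc ‖x‖ ≤ C * ‖L v x‖ := hest v v.2 x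
            _ = C * ‖w‖ := by rw [hx]
            _ ≤ D * ‖w‖ := mul_le_mul_of_nonneg_right (le_abs_self C) (norm_nonneg _)
        refine ⟨L u x, Set.mem_range_self x, ?_⟩
        have hdv : ‖(L v : B →L[ℝ] W) - L u‖ < δ := by
          simpa [dist_eq_norm] using hvball
        calc dist w (L u x) = ‖L v x - L u x‖ := by rw [dist_eq_norm, hx]
          _ = ‖((L v : B →L[ℝ] W) - L u) x‖ := by simp
          _ ≤ ‖(L v : B →L[ℝ] W) - L u‖ * ‖x‖ := ContinuousLinearMap.le_opNorm _ _
          _ < δ * (D * ‖w‖ + 1) := by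
              apply mul_lt_mul'' hdv (lt_of_le_of_lt hxnorm (by linarith)) (norm_nonneg _)
                (norm_nonneg _)
          _ = ε := div_mul_cancel₀ ε (ne_of_gt hden)
      rw [hcl.closure_eq] at this
      exact this
    have hpc : PreconnectedSpace I := Subtype.preconnectedSpace isPreconnected_Icc
    have huniv : S = Set.univ := IsClopen.eq_univ ⟨hclosed, hopen⟩ ⟨⟨t, ht⟩, hsurj⟩
    have : (⟨s, hs⟩ : I) ∈ S := huniv ▸ Set.mem_univ _
    exact this
  have h0 : (0 : ℝ) ∈ I := Set.left_mem_Icc.2 zero_le_one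
  have h1 : (1 : ℝ) ∈ I := Set.right_mem_Icc.2 zero_le_one
  exact ⟨key 1 h1 0 h0, key 0 h0 1 h1⟩
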